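/- For every real q with 0 ≤ q < 1, the series ∑_{n=0}^∞ (-1)^n q^{n(n+1)/2} / ((q^2;q)_n) equals 1 - q, where (q^2;q)_n = ∏_{k=0}^{n-1}(1 - q^{2+k}). -/

import Mathlib

open Finset Filter

theorem heine_G0_eq_one_sub (q : ℝ) (hq0 : 0 ≤ q) (hq1 : q < 1) :
    ∑' n : ℕ, (-1 : ℝ) ^ n * q ^ (n * (n + 1) / 2) /
      (∏ k ∈ Finset.range n, (1 - q ^ (2 + k))) = 1 - q := by
  set f : ℕ → ℝ := fun n => (-1 : ℝ) ^ n * q ^ (n * (n + 1) / 2) /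
      (∏ k ∈ Finset.range n, (1 - q ^ (2 + k))) with hf
  -- positivity of the denominators
  have hfac : ∀ k : ℕ, 0 < 1 - q ^ (2 + k) := fun k => by
    have : q ^ (2 + k) < 1 := pow_lt_one₀ hq0 hq1 (by omega)
    linarith
  have hprod : ∀ n : ℕ, 0 < ∏ k ∈ Finset.range n, (1 - q ^ (2 + k)) := fun n =>
    Finset.prod_pos fun k _ => hfac k
  -- exponent arithmetic
  have hexp : ∀ n : ℕ, (n + 1) * (n + 2) / 2 = n * (n + 1) / 2 + (n + 1) := by
    intro n
    have h1 : (n + 1) * (n + 2) = n * (n + 1) + 2 * (n + 1) := by ring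
    rw [h1, Nat.add_mul_div_left _ _ (by norm_num : 0 < 2)]
  -- recursion for f
  have hrec : ∀ n : ℕ, f (n + 1) = f n * (-(q ^ (n + 1)) / (1 - q ^ (2 + n))) := by
    intro n
    simp only [hf]
    rw [Finset.prod_range_succ]
    have h2 : (n + 1) * ((n + 1) + 1) / 2 = n * (n + 1) / 2 + (n + 1) := hexp n
    rw [h2, pow_add, pow_succ]
    have := (hprod n).ne'
    have := (hfac n).ne'
    field_simp
    ring
  -- summability by ratio test
  have hsum : Summable f := by
    apply summable_of_ratio_norm_eventually_le (r := 1/2) (by norm_num)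
    have h1 : Tendsto (fun n : ℕ => q ^ (n + 1)) atTop (nhds 0) := by
      have := tendsto_pow_atTop_nhds_zero_of_lt_one hq0 hq1
      exact this.comp (tendsto_add_atTop_nat 1)
    have h2 : Tendsto (fun n : ℕ => q ^ (2 + n)) atTop (nhds 0) := by
      have := tendsto_pow_atTop_nhds_zero_of_lt_one hq0 hq1
      simpa [add_comm, Function.comp_def] using this.comp (tendsto_add_atTop_nat 2)
    have e1 : ∀ᶠ n : ℕ in atTop, q ^ (n + 1) ≤ 1/4 :=
      h1.eventually (ge_mem_nhds (by norm_num))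
    have e2 : ∀ᶠ n : ℕ in atTop, q ^ (2 + n) ≤ 1/2 :=
      h2.eventually (ge_mem_nhds (by norm_num))
    filter_upwards [e1, e2] with n hn1 hn2
    rw [hrec n]
    rw [norm_mul]
    have hq2 : (1:ℝ)/2 ≤ 1 - q ^ (2 + n) := by linarith
    have hb : ‖-(q ^ (n + 1)) / (1 - q ^ (2 + n))‖ ≤ 1/2 := by
      rw [norm_div, norm_neg, norm_pow, Real.norm_of_nonneg hq0,
        Real.norm_of_nonneg (by linarith : (0:ℝ) ≤ 1 - q ^ (2+n))]
      rw [div_le_iff₀ (by linarith)]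
      nlinarith [pow_nonneg hq0 (n+1)]
    calc ‖f n‖ * ‖-(q ^ (n + 1)) / (1 - q ^ (2 + n))‖ ≤ ‖f n‖ * (1/2) := by
          exact mul_le_mul_of_nonneg_left hb (norm_nonneg _)
      _ = 1/2 * ‖f n‖ := by ring
  -- partial sum formula
  set E : ℕ → ℝ := fun N => (-1 : ℝ) ^ N * q ^ ((N + 1) * (N + 2) / 2) /
      (∏ k ∈ Finset.range N, (1 - q ^ (2 + k))) with hE
  have hpartial : ∀ N : ℕ, ∑ n ∈ Finset.range (N + 1), f n = (1 - q) + E N := by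
    intro N
    induction N with
    | zero => simp [hf, hE]
    | succ N ih =>
      rw [Finset.sum_range_succ, ih]
      have key : E N + f (N + 1) = E (N + 1) := by
        simp only [hE, hf]
        rw [Finset.prod_range_succ]
        have h2 : (N + 1) * ((N + 1) + 1) / 2 = N * (N + 1) / 2 + (N + 1) := hexp N
        have h3 : (N + 1 + 1) * (N + 1 + 2) / 2 = (N + 1) * (N + 2) / 2 + (2 + N) := by
          have h1 : (N + 1 + 1) * (N + 1 + 2) = (N + 1) * (N + 2) + 2 * (2 + N) := by ring
          rw [h1, Nat.add_mul_div_left _ _ (by norm_num : 0 < 2)]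
        have h4 : (N + 1) * ((N + 1) + 1) = (N + 1) * (N + 2) := by ring
        rw [h4, h3, pow_add q ((N + 1) * (N + 2) / 2) (2 + N), pow_succ (-1 : ℝ) N]
        have hD := (hprod N).ne'
        have hd := (hfac N).ne'
        generalize q ^ ((N + 1) * (N + 2) / 2) = P
        generalize hDdef : ∏ k ∈ Finset.range N, (1 - q ^ (2 + k)) = D at hD ⊢
        generalize hddef : (1 : ℝ) - q ^ (2 + N) = d at hd ⊢
        have hq' : q ^ (2 + N) = 1 - d := by rw [← hddef]; ring
        rw [hq']
        field_simp
        ring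
      linarith [key]
  -- E N → 0
  have hE0 : Tendsto E atTop (nhds 0) := by
    have hEeq : ∀ N : ℕ, E N = -(f (N + 1)) * (1 - q ^ (2 + N)) := by
      intro N
      simp only [hE, hf]
      rw [Finset.prod_range_succ]
      have h4 : (N + 1) * ((N + 1) + 1) = (N + 1) * (N + 2) := by ring
      rw [h4]
      have := (hprod N).ne'
      have := (hfac N).ne'
      field_simp
      ring
    have hf0 : Tendsto (fun N : ℕ => -(f (N + 1))) atTop (nhds 0) := by
      have := hsum.tendsto_atTop_zero
      have := (this.comp (tendsto_add_atTop_nat 1)).neg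
      simpa using this
    have hq0' : Tendsto (fun N : ℕ => 1 - q ^ (2 + N)) atTop (nhds 1) := by
      have h2 : Tendsto (fun n : ℕ => q ^ (2 + n)) atTop (nhds 0) := by
        have := tendsto_pow_atTop_nhds_zero_of_lt_one hq0 hq1
        simpa [add_comm, Function.comp_def] using this.comp (tendsto_add_atTop_nat 2)
      simpa using (tendsto_const_nhds (x := (1:ℝ))).sub h2
    have := hf0.mul hq0'
    simp only [zero_mul] at this
    exact (funext hEeq ▸ this : Tendsto E atTop (nhds 0))
  -- conclude
  have htendsto : Tendsto (fun N : ℕ => ∑ n ∈ Finset.range N, f n) atTop (nhds (1 - q)) := by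
    rw [← tendsto_add_atTop_iff_nat 1]
    have : Tendsto (fun N : ℕ => (1 - q) + E N) atTop (nhds (1 - q)) := by
      simpa using (tendsto_const_nhds (x := (1 - q : ℝ))).add hE0
    exact this.congr fun N => (hpartial N).symm
  exact ((hsum.hasSum_iff_tendsto_nat).mpr htendsto).tsum_eq
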